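/- Let r ≥ 0 and let ρ be a Borel probability measure on ℝ^d with support contained in B_r = [-r,r]^d. For every n ≥ 1 there exist finite Borel measures ρ_1,…,ρ_n on ℝ^d and Borel subsets A_1,…,A_n of B_r such that ρ = ρ_1 + ⋯ + ρ_n, and for every k = 1,…,n: |ρ_k| = 1/n, Supp(ρ_k) ⊆ A_k, and Diam(A_k) ≤ 4r·k^{-1/d}. -/

import Mathlib

open MeasureTheory Metric
open scoped ENNReal NNReal

lemma ud_exists_cube (d n k : ℕ) (hd : 1 ≤ d) (hk : 1 ≤ k) (hn : 1 ≤ n) (r : ℝ) (hr : 0 ≤ r)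
    (μ : Measure (Fin d → ℝ)) (hμ : (k : ℝ≥0∞) / n ≤ μ Set.univ)
    (hsupp : μ (closedBall 0 r)ᶜ = 0) :
    ∃ A : Set (Fin d → ℝ), MeasurableSet A ∧ A ⊆ closedBall (0 : Fin d → ℝ) r ∧
      Metric.diam A ≤ 4 * r * (k : ℝ) ^ (-(1 : ℝ) / d) ∧ (n : ℝ≥0∞)⁻¹ ≤ μ A := by
  have hd0 : (0 : ℝ) < d := by exact_mod_cast hd
  have hk1 : (1 : ℝ) ≤ (k : ℝ) := by exact_mod_cast hk
  -- the number of subdivisions per axis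
  set m : ℕ := ⌊(k : ℝ) ^ ((1 : ℝ) / d)⌋₊ with hm
  have hx1 : (1 : ℝ) ≤ (k : ℝ) ^ ((1 : ℝ) / d) :=
    Real.one_le_rpow hk1 (by positivity)
  have hm1 : 1 ≤ m := Nat.le_floor (by exact_mod_cast hx1)
  have hmk : m ^ d ≤ k := by
    have h1 : (m : ℝ) ≤ (k : ℝ) ^ ((1 : ℝ) / d) := Nat.floor_le (by positivity)
    have h2 : ((m : ℝ)) ^ d ≤ ((k : ℝ) ^ ((1 : ℝ) / d)) ^ d :=
      pow_le_pow_left₀ (by positivity) h1 d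
    have h3 : ((k : ℝ) ^ ((1 : ℝ) / d)) ^ d = (k : ℝ) := by
      rw [← Real.rpow_natCast ((k : ℝ) ^ ((1 : ℝ) / d)) d, ← Real.rpow_mul (by positivity)]
      rw [one_div_mul_cancel (ne_of_gt hd0), Real.rpow_one]
    have h4 : ((m : ℝ)) ^ d ≤ (k : ℝ) := h3 ▸ h2
    exact_mod_cast h4
  have hm0 : (0 : ℝ) < m := by exact_mod_cast hm1
  -- the side length
  set h : ℝ := 2 * r / m with hh
  have hh0 : 0 ≤ h := by positivity
  -- the cubes
  set C : (Fin d → Fin m) → Set (Fin d → ℝ) := fun g =>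
    Set.univ.pi fun i => Set.Icc (-r + (g i : ℝ) * h) (-r + ((g i : ℝ) + 1) * h) with hC
  have hCmeas : ∀ g, MeasurableSet (C g) := fun g =>
    MeasurableSet.univ_pi fun i => measurableSet_Icc
  -- each cube is inside the ball
  have hCball : ∀ g, C g ⊆ closedBall (0 : Fin d → ℝ) r := by
    intro g x hx
    rw [mem_closedBall, dist_pi_le_iff hr]
    intro i
    have hxi := hx i (Set.mem_univ i)
    simp only [Set.mem_Icc] at hxi
    simp only [Pi.zero_apply, Real.dist_eq, sub_zero]
    rw [abs_le]
    constructor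
    · calc -r ≤ -r + (g i : ℝ) * h := by nlinarith [(g i).is_lt, hxi.1]
        _ ≤ x i := hxi.1
    · calc x i ≤ -r + ((g i : ℝ) + 1) * h := hxi.2
        _ ≤ r := by
            have h1 : ((g i : ℝ) + 1) ≤ (m : ℝ) := by
              have h' : (g i : ℕ) + 1 ≤ m := (g i).is_lt
              exact_mod_cast h'
            have h2 : ((g i : ℝ) + 1) * h ≤ (m : ℝ) * h :=
              mul_le_mul_of_nonneg_right h1 hh0
            have h3 : (m : ℝ) * h = 2 * r := by rw [hh]; field_simp
            linarith
  -- the cubes cover the ball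
  have hcover : closedBall (0 : Fin d → ℝ) r ⊆ ⋃ g, C g := by
    intro x hx
    rw [mem_closedBall, dist_pi_le_iff hr] at hx
    have hxi : ∀ i, |x i| ≤ r := by
      intro i; have := hx i; rwa [Pi.zero_apply, Real.dist_eq, sub_zero] at this
    refine Set.mem_iUnion.2 ?_
    refine ⟨fun i => ⟨min ⌊(x i + r) / h⌋₊ (m - 1), ?_⟩, ?_⟩
    · exact lt_of_le_of_lt (min_le_right _ _) (by omega)
    · intro i _
      simp only [Set.mem_Icc]
      rcases eq_or_lt_of_le hr with hr0 | hr0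
      · have hxi0 : x i = 0 := by have := hxi i; rw [← hr0] at this; simpa [abs_nonpos_iff] using this
        have hh0' : h = 0 := by rw [hh, ← hr0]; ring
        simp [hxi0, hh0', ← hr0]
      · have hhpos : 0 < h := by positivity
        set t : ℝ := (x i + r) / h with ht
        have ht0 : 0 ≤ t := by
          apply div_nonneg _ (le_of_lt hhpos); linarith [abs_le.1 (hxi i)]
        have htm : t ≤ (m : ℝ) := by
          rw [div_le_iff₀ hhpos]
          have : (m : ℝ) * h = 2 * r := by rw [hh]; field_simp
          rw [this]; linarith [abs_le.1 (hxi i)]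
        set j : ℕ := min ⌊t⌋₊ (m - 1) with hj
        have hjcoe : ((⟨j, lt_of_le_of_lt (min_le_right _ _) (by omega)⟩ : Fin m) : ℝ) = (j : ℝ) := rfl
        constructor
        · have : (j : ℝ) ≤ t := by
            refine le_trans ?_ (Nat.floor_le ht0)
            exact_mod_cast min_le_left _ _
          rw [hjcoe]
          have := mul_le_mul_of_nonneg_right this (le_of_lt hhpos)
          rw [ht] at this
          rw [div_mul_cancel₀ _ (ne_of_gt hhpos)] at this
          linarith
        · have hlt : t ≤ (j : ℝ) + 1 := by
            rcases le_or_gt ⌊t⌋₊ (m - 1) with hc | hc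
            · have : j = ⌊t⌋₊ := by omega
              rw [this]
              exact le_of_lt (Nat.lt_floor_add_one t)
            · have : j = m - 1 := by omega
              rw [this]
              have : ((m - 1 : ℕ) : ℝ) + 1 = (m : ℝ) := by
                have : m - 1 + 1 = m := by omega
                exact_mod_cast congrArg (Nat.cast (R := ℝ)) this
              rw [this]; exact htm
          rw [hjcoe]
          have := mul_le_mul_of_nonneg_right hlt (le_of_lt hhpos)
          rw [ht, div_mul_cancel₀ _ (ne_of_gt hhpos)] at this
          linarith
  -- diameter bound
  have hdiam : ∀ g, Metric.diam (C g) ≤ h := by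
    intro g
    apply Metric.diam_le_of_forall_dist_le hh0
    intro x hx y hy
    rw [dist_pi_le_iff hh0]
    intro i
    have hxi := hx i (Set.mem_univ i)
    have hyi := hy i (Set.mem_univ i)
    calc dist (x i) (y i) ≤ (-r + ((g i : ℝ) + 1) * h) - (-r + (g i : ℝ) * h) :=
          Real.dist_le_of_mem_Icc hxi hyi
      _ = h := by ring
  have hbound : h ≤ 4 * r * (k : ℝ) ^ (-(1 : ℝ) / d) := by
    have hfl : (k : ℝ) ^ ((1 : ℝ) / d) ≤ 2 * (m : ℝ) := by
      have h1 : (k : ℝ) ^ ((1 : ℝ) / d) < (m : ℝ) + 1 := Nat.lt_floor_add_one _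
      have h2 : (1 : ℝ) ≤ (m : ℝ) := by exact_mod_cast hm1
      linarith
    have hrpos : (0 : ℝ) < (k : ℝ) ^ ((1 : ℝ) / d) := by positivity
    have hneg : (k : ℝ) ^ (-(1 : ℝ) / d) = ((k : ℝ) ^ ((1 : ℝ) / d))⁻¹ := by
      rw [neg_div, Real.rpow_neg (by positivity)]
    rw [hneg, hh, div_le_iff₀ hm0]
    have heq : 4 * r * ((k : ℝ) ^ ((1 : ℝ) / d))⁻¹ * (m : ℝ)
        = (4 * r * (m : ℝ)) / ((k : ℝ) ^ ((1 : ℝ) / d)) := by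
      field_simp
    rw [heq, le_div_iff₀ hrpos]
    nlinarith
  -- pigeonhole: some cube has measure ≥ 1/n
  have hball : μ (closedBall (0 : Fin d → ℝ) r) = μ Set.univ := by
    have := measure_add_measure_compl (μ := μ) (measurableSet_closedBall (x := (0 : Fin d → ℝ)) (ε := r))
    rw [hsupp, add_zero] at this
    exact this
  obtain ⟨g₀, -, hg₀⟩ := Finset.exists_max_image (Finset.univ : Finset (Fin d → Fin m)) (fun g => μ (C g))
    ⟨fun _ => ⟨0, hm1⟩, Finset.mem_univ _⟩
  have hsum : μ Set.univ ≤ ∑ g : Fin d → Fin m, μ (C g) := by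
    rw [← hball]
    exact le_trans (measure_mono hcover) (measure_iUnion_fintype_le μ C)
  have hsum2 : ∑ g : Fin d → Fin m, μ (C g) ≤ (k : ℝ≥0∞) * μ (C g₀) := by
    calc ∑ g : Fin d → Fin m, μ (C g) ≤ ∑ _g : Fin d → Fin m, μ (C g₀) :=
          Finset.sum_le_sum fun g _ => hg₀ g (Finset.mem_univ g)
      _ = ((m ^ d : ℕ) : ℝ≥0∞) * μ (C g₀) := by
          rw [Finset.sum_const, Finset.card_univ]
          simp [Fintype.card_fun, nsmul_eq_mul]
      _ ≤ (k : ℝ≥0∞) * μ (C g₀) := by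
          exact mul_le_mul_of_nonneg_right (by exact_mod_cast hmk) zero_le
  have hkey : (k : ℝ≥0∞) * (n : ℝ≥0∞)⁻¹ ≤ (k : ℝ≥0∞) * μ (C g₀) := by
    calc (k : ℝ≥0∞) * (n : ℝ≥0∞)⁻¹ = (k : ℝ≥0∞) / n := by rw [div_eq_mul_inv]
      _ ≤ μ Set.univ := hμ
      _ ≤ (k : ℝ≥0∞) * μ (C g₀) := le_trans hsum hsum2
  have hk0 : (k : ℝ≥0∞) ≠ 0 := by exact_mod_cast Nat.cast_ne_zero.mpr (by omega)
  have hfinal : (n : ℝ≥0∞)⁻¹ ≤ μ (C g₀) :=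
    (ENNReal.mul_le_mul_iff_right hk0 (ENNReal.natCast_ne_top k)).mp hkey
  exact ⟨C g₀, hCmeas g₀, hCball g₀, le_trans (hdiam g₀) hbound, hfinal⟩

lemma ud_aux (d n : ℕ) (hd : 1 ≤ d) (hn : 1 ≤ n) (r : ℝ) (hr : 0 ≤ r) :
    ∀ m : ℕ, ∀ μ : Measure (Fin d → ℝ), IsFiniteMeasure μ →
      μ Set.univ = (m : ℝ≥0∞) / n → μ (closedBall (0 : Fin d → ℝ) r)ᶜ = 0 →
      ∃ (ρs : Fin m → Measure (Fin d → ℝ)) (As : Fin m → Set (Fin d → ℝ)),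
        μ = ∑ k, ρs k ∧
        ∀ k : Fin m,
          ρs k Set.univ = (n : ℝ≥0∞)⁻¹ ∧
          ρs k (As k)ᶜ = 0 ∧
          As k ⊆ closedBall 0 r ∧
          Metric.diam (As k) ≤ 4 * r * (((k : ℕ) + 1 : ℝ)) ^ (-(1 : ℝ) / d) := by
  have hn0 : (n : ℝ≥0∞) ≠ 0 := by exact_mod_cast Nat.cast_ne_zero.mpr (by omega)
  have hntop : (n : ℝ≥0∞) ≠ ⊤ := ENNReal.natCast_ne_top n
  intro m
  induction m with
  | zero =>
    intro μ _ hμ _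
    refine ⟨Fin.elim0, Fin.elim0, ?_, fun k => k.elim0⟩
    have h0 : μ = 0 := Measure.measure_univ_eq_zero.mp (by simpa using hμ)
    simp [h0]
  | succ m ih =>
    intro μ hfin μm hμsupp
    obtain ⟨A, hAmeas, hAball, hAdiam, hAmass⟩ :=
      ud_exists_cube d n (m + 1) hd (by omega) hn r hr μ (le_of_eq μm.symm) hμsupp
    have hμA_top : μ A ≠ ⊤ := measure_ne_top μ A
    have hμA_0 : μ A ≠ 0 := by
      intro h0
      rw [h0] at hAmass
      exact (ENNReal.inv_ne_zero.mpr hntop) (le_antisymm hAmass zero_le)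
    set c : ℝ≥0∞ := ((n : ℝ≥0∞) * μ A)⁻¹ with hc
    set ν : Measure (Fin d → ℝ) := c • μ.restrict A with hν
    have hνuniv : ν Set.univ = (n : ℝ≥0∞)⁻¹ := by
      rw [hν, Measure.smul_apply, Measure.restrict_apply_univ, smul_eq_mul, hc]
      rw [ENNReal.mul_inv (Or.inl hn0) (Or.inl hntop), mul_assoc,
        ENNReal.inv_mul_cancel hμA_0 hμA_top, mul_one]
    have hc1 : c ≤ 1 := by
      rw [hc, ENNReal.inv_le_one]
      calc (1 : ℝ≥0∞) = (n : ℝ≥0∞) * (n : ℝ≥0∞)⁻¹ := (ENNReal.mul_inv_cancel hn0 hntop).symm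
        _ ≤ (n : ℝ≥0∞) * μ A := mul_le_mul_of_nonneg_left hAmass zero_le
    have hνle : ν ≤ μ := by
      rw [Measure.le_iff]
      intro s hs
      calc ν s = c * μ.restrict A s := by rw [hν, Measure.smul_apply, smul_eq_mul]
        _ ≤ 1 * μ.restrict A s := mul_le_mul_of_nonneg_right hc1 zero_le
        _ = μ.restrict A s := one_mul _
        _ ≤ μ s := Measure.restrict_le_self s
    have hνfin : IsFiniteMeasure ν := isFiniteMeasure_of_le μ hνle
    set μ' : Measure (Fin d → ℝ) := μ - ν with hμ'
    have hμ'univ : μ' Set.univ = (m : ℝ≥0∞) / n := by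
      rw [hμ', Measure.sub_apply MeasurableSet.univ hνle, μm, hνuniv]
      rw [show ((m + 1 : ℕ) : ℝ≥0∞) = (m : ℝ≥0∞) + 1 by push_cast; ring]
      rw [ENNReal.add_div, one_div]
      exact ENNReal.add_sub_cancel_right (ENNReal.inv_ne_top.mpr hn0)
    have hμ'supp : μ' (closedBall (0 : Fin d → ℝ) r)ᶜ = 0 := by
      have hle := Measure.le_iff'.mp (Measure.sub_le (μ := μ) (ν := ν)) (closedBall (0 : Fin d → ℝ) r)ᶜ
      rw [hμsupp] at hle
      exact le_antisymm hle zero_le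
    have hμ'fin : IsFiniteMeasure μ' := isFiniteMeasure_of_le μ Measure.sub_le
    obtain ⟨ρs', As', hsum', hprop'⟩ := ih μ' hμ'fin hμ'univ hμ'supp
    refine ⟨Fin.lastCases ν ρs', Fin.lastCases A As', ?_, ?_⟩
    · rw [Fin.sum_univ_castSucc]
      simp only [Fin.lastCases_castSucc, Fin.lastCases_last]
      rw [← hsum']
      exact (Measure.sub_add_cancel_of_le hνle).symm
    · intro k
      refine Fin.lastCases ?_ ?_ k
      · simp only [Fin.lastCases_last]
        refine ⟨hνuniv, ?_, hAball, ?_⟩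
        · rw [hν, Measure.smul_apply, Measure.restrict_apply hAmeas.compl,
            Set.compl_inter_self, measure_empty, smul_eq_mul, mul_zero]
        · simp only [Fin.val_last]
          have : ((m : ℝ) + 1) = ((m + 1 : ℕ) : ℝ) := by push_cast; ring
          rw [this]
          exact hAdiam
      · intro j
        simp only [Fin.lastCases_castSucc]
        simpa [Fin.coe_castSucc] using hprop' j

theorem uniform_decomposition (d n : ℕ) (hd : 1 ≤ d) (hn : 1 ≤ n) (r : ℝ) (hr : 0 ≤ r)
    (ρ : Measure (Fin d → ℝ)) [IsProbabilityMeasure ρ]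
    (hsupp : ρ (closedBall 0 r)ᶜ = 0) :
    ∃ (ρs : Fin n → Measure (Fin d → ℝ)) (As : Fin n → Set (Fin d → ℝ)),
      ρ = ∑ k, ρs k ∧
      ∀ k : Fin n,
        ρs k Set.univ = (n : ℝ≥0∞)⁻¹ ∧
        ρs k (As k)ᶜ = 0 ∧
        As k ⊆ closedBall 0 r ∧
        Metric.diam (As k) ≤ 4 * r * (((k : ℕ) + 1 : ℝ)) ^ (-(1 : ℝ) / d) := by
  have hn0 : (n : ℝ≥0∞) ≠ 0 := by exact_mod_cast Nat.cast_ne_zero.mpr (by omega)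
  exact ud_aux d n hd hn r hr n ρ inferInstance
    (by rw [measure_univ, ENNReal.div_self hn0 (ENNReal.natCast_ne_top n)]) hsupp
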